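/- Consider a two-stripe circulant TSP instance on n vertices with stripe lengths a₁, a₂, gcd(n, a₁, a₂) = 1, where edges of length a₁ cost 0 and edges of length a₂ cost 1. If there exists an integer y with 0 ≤ y ≤ g₁ (where g₁ = gcd(n, a₁)) such that (2y − g₁)·a₁ + g₁·a₂ ≡ 0 (mod n), then there exists a Hamiltonian cycle in C⟨{a₁, a₂}⟩ of cost exactly g₁. -/

import Mathlib

namespace Stmt3Aux

variable {V : Type*} {G : SimpleGraph V}

/-- Build a walk following `f 0, f 1, ..., f k`. -/
def walkOf (f : ℕ → V) (hf : ∀ i, G.Adj (f i) (f (i+1))) : (k : ℕ) → G.Walk (f 0) (f k)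
  | 0 => SimpleGraph.Walk.nil
  | k+1 => (walkOf f hf k).concat (hf k)

lemma length_walkOf (f : ℕ → V) (hf : ∀ i, G.Adj (f i) (f (i+1))) (k : ℕ) :
    (walkOf f hf k).length = k := by
  induction k with
  | zero => rfl
  | succ k ih => simp [walkOf, SimpleGraph.Walk.length_concat, ih]

lemma support_walkOf (f : ℕ → V) (hf : ∀ i, G.Adj (f i) (f (i+1))) (k : ℕ) :
    (walkOf f hf k).support = (List.range (k+1)).map f := by
  induction k with
  | zero => rfl
  | succ k ih =>
      simp only [walkOf, SimpleGraph.Walk.support_concat, ih, List.range_succ (n := k+1)]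
      simp

lemma darts_walkOf (f : ℕ → V) (hf : ∀ i, G.Adj (f i) (f (i+1))) (k : ℕ) :
    (walkOf f hf k).darts = (List.range k).map (fun i => ⟨(f i, f (i+1)), hf i⟩) := by
  induction k with
  | zero => rfl
  | succ k ih =>
      simp only [walkOf, SimpleGraph.Walk.darts_concat, ih, List.range_succ (n := k)]
      simp

end Stmt3Aux

/-- Two-stripe circulant TSP: if there is `0 ≤ y ≤ g₁` with
`(2y − g₁)a₁ + g₁a₂ ≡ 0 (mod n)` (where `g₁ = gcd(n,a₁)`), then the circulant graph
`C⟨{a₁,a₂}⟩` has a Hamiltonian cycle using exactly `g₁` edges of length `a₂`. -/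
theorem stmt_3 (n a₁ a₂ : ℕ) (hn : 0 < n)
    (ha₁ : 1 ≤ a₁) (ha₂ : 1 ≤ a₂) (hne : a₁ ≠ a₂)
    (hb₁ : 2 * a₁ ≤ n) (hb₂ : 2 * a₂ ≤ n)
    (hg : Nat.gcd (Nat.gcd n a₁) a₂ = 1)
    (hy : ∃ y : ℕ, y ≤ Nat.gcd n a₁ ∧
      (2 * (y : ℤ) - (Nat.gcd n a₁ : ℤ)) * (a₁ : ℤ) + (Nat.gcd n a₁ : ℤ) * (a₂ : ℤ)
        ≡ 0 [ZMOD (n : ℤ)]) :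
    ∃ (v : ZMod n) (w : (SimpleGraph.circulantGraph
        ({(a₁ : ZMod n), (a₂ : ZMod n)} : Set (ZMod n))).Walk v v),
      w.IsHamiltonianCycle ∧
      w.darts.countP (fun d => decide (d.toProd.2 - d.toProd.1 = (a₂ : ZMod n) ∨
        d.toProd.1 - d.toProd.2 = (a₂ : ZMod n))) = Nat.gcd n a₁ := by
  classical
  obtain ⟨y, hyle, hcong⟩ := hy
  haveI : NeZero n := ⟨hn.ne'⟩
  set g : ℕ := Nat.gcd n a₁ with hgdef
  set m : ℕ := n / g with hmdef
  have hgdvdn : g ∣ n := Nat.gcd_dvd_left n a₁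
  have hgdvda : g ∣ a₁ := Nat.gcd_dvd_right n a₁
  have hgpos : 0 < g := Nat.gcd_pos_of_pos_left _ hn
  have hmn : m * g = n := Nat.div_mul_cancel hgdvdn
  have ha₁n : a₁ < n := by omega
  have ha₂n : a₂ < n := by omega
  have hm2 : 2 ≤ m := by
    have hga : g ≤ a₁ := Nat.le_of_dvd ha₁ hgdvda
    rcases Nat.lt_or_ge m 2 with h | h
    · interval_cases m <;> omega
    · exact h
  have hn4 : 4 ≤ n := by
    rcases Nat.lt_or_ge a₁ a₂ with h | h <;> omega
  -- Number of "positive" segments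
  set Y : ℕ := g - y with hYdef
  -- the sign of segment q
  set ε : ℕ → ℤ := fun q => if q < Y then 1 else -1 with hεdef
  -- starting point of segment q (an integer)
  set S : ℕ → ℤ := fun q => q * a₂ + (2 * ((min q Y : ℕ) : ℤ) - q) * (((m : ℤ) - 1) * a₁) with hSdef
  -- the vertex function
  set F : ℕ → ℤ := fun t => S ((t / m) % g) + ε ((t / m) % g) * (((t % m : ℕ) : ℤ) * a₁) with hFdef
  set f : ℕ → ZMod n := fun t => ((F t : ℤ) : ZMod n) with hfdef
  -- basic recurrence for S
  have hSrec : ∀ q : ℕ, S (q + 1) = S q + ε q * (((m : ℤ) - 1) * a₁) + a₂ := by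
    intro q
    rcases lt_or_ge q Y with h | h
    · have h1 : min q Y = q := Nat.min_eq_left h.le
      have h2 : min (q+1) Y = q+1 := Nat.min_eq_left h
      simp only [hSdef, h1, h2, hεdef, if_pos h]
      push_cast; ring
    · have h1 : min q Y = Y := Nat.min_eq_right h
      have h2 : min (q+1) Y = Y := Nat.min_eq_right (by omega)
      simp only [hSdef, h1, h2, hεdef, if_neg (by omega : ¬ q < Y)]
      push_cast; ring
  -- (m : ZMod n) * a₁ = 0
  have hma : ((m : ℤ) * a₁ : ℤ) ≡ 0 [ZMOD (n : ℤ)] := by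
    have : (n : ℤ) ∣ (m : ℤ) * a₁ := by
      obtain ⟨a', ha'⟩ := hgdvda
      refine ⟨a', ?_⟩
      push_cast [ha']
      rw [← hmn]; push_cast; ring
    exact Int.modEq_zero_iff_dvd.mpr this
  -- S g ≡ 0 mod n
  have hSg : ((S g : ℤ) : ZMod n) = 0 := by
    have h1 : (S g : ℤ) ≡ g * a₂ + (2 * (Y : ℤ) - g) * (-(a₁ : ℤ)) [ZMOD (n : ℤ)] := by
      have hminY : min g Y = Y := Nat.min_eq_right (by omega)
      simp only [hSdef, hminY]
      have : ((m : ℤ) - 1) * a₁ ≡ 0 - a₁ [ZMOD (n : ℤ)] := by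
        have := hma.sub (Int.ModEq.refl (a₁ : ℤ))
        simpa [sub_mul, one_mul] using this
      exact (Int.ModEq.refl ((g : ℤ) * a₂)).add ((Int.ModEq.refl _).mul (by simpa using this))
    have h2 : ((g : ℤ) * a₂ + (2 * (Y : ℤ) - g) * (-(a₁ : ℤ))) ≡ 0 [ZMOD (n : ℤ)] := by
      have hYy : (Y : ℤ) = (g : ℤ) - y := by push_cast [hYdef]; omega
      have : (g : ℤ) * a₂ + (2 * (Y : ℤ) - g) * (-(a₁ : ℤ))
          = (2 * (y : ℤ) - g) * a₁ + g * a₂ := by rw [hYy]; ring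
      rw [this]; exact hcong
    have := h1.trans h2
    exact_mod_cast (ZMod.intCast_eq_intCast_iff _ _ _).mpr this
  -- order of a₁ : x * a₁ = 0 in ZMod n ↔ m ∣ x
  have horder : ∀ x : ℤ, ((x * a₁ : ℤ) : ZMod n) = 0 ↔ (m : ℤ) ∣ x := by
    intro x
    rw [ZMod.intCast_zmod_eq_zero_iff_dvd]
    obtain ⟨a', ha'⟩ := hgdvda
    have hcop : IsCoprime (m : ℤ) (a' : ℤ) := by
      rw [Int.isCoprime_iff_gcd_eq_one]
      have := Nat.coprime_div_gcd_div_gcd (m := n) (n := a₁) hgpos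
      have h1 : a₁ / g = a' := by rw [ha']; exact Nat.mul_div_cancel_left a' hgpos
      rw [h1] at this
      simpa [Int.gcd] using this
    constructor
    · rintro ⟨c, hc⟩
      have hgz : (g : ℤ) ≠ 0 := by exact_mod_cast hgpos.ne'
      have h1 : x * a' * (g:ℤ) = (m:ℤ) * c * (g:ℤ) := by
        have hn' : (n : ℤ) = (m:ℤ) * g := by exact_mod_cast hmn.symm
        calc x * a' * (g:ℤ) = x * a₁ := by push_cast [ha']; ring
        _ = (n:ℤ) * c := hc
        _ = (m:ℤ) * c * g := by rw [hn']; ring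
      have h2 : (m:ℤ) ∣ x * a' := ⟨c, mul_right_cancel₀ hgz h1⟩
      exact hcop.dvd_of_dvd_mul_right h2
    · rintro ⟨c, hc⟩
      refine ⟨c * a', ?_⟩
      have hn' : (n : ℤ) = (m:ℤ) * g := by exact_mod_cast hmn.symm
      rw [hc, hn']
      push_cast [ha']
      ring
  -- step lemma
  have hstep : ∀ t : ℕ, f (t + 1) - f t
      = (if t % m = m - 1 then ((a₂ : ℕ) : ZMod n) else (ε ((t / m) % g) : ZMod n) * a₁) := by
    intro t
    have hmpos : 0 < m := by omega
    have hdm := Nat.div_add_mod t m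
    have hrm : t % m < m := Nat.mod_lt _ hmpos
    by_cases hcase : t % m = m - 1
    · -- jump step
      rw [if_pos hcase]
      have hcomm : (t / m + 1) * m = m * (t / m) + m := by ring
      have ht1 : t + 1 = (t / m + 1) * m := by omega
      have h1 : (t + 1) / m = t / m + 1 := by rw [ht1, Nat.mul_div_cancel _ hmpos]
      have h2 : (t + 1) % m = 0 := by rw [ht1]; exact Nat.mul_mod_left _ _
      have hqlt : (t / m) % g < g := Nat.mod_lt _ hgpos
      set q : ℕ := (t / m) % g with hqdef
      have hmodq : (t / m + 1) % g = (q + 1) % g :=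
        Nat.ModEq.add_right 1 (show t / m % g = q % g by rw [Nat.mod_eq_of_lt hqlt])
      have h3' : (t / m + 1) % g = (q + 1) % g := hmodq
      have hFt : F t = S q + ε q * (((m:ℤ) - 1) * a₁) := by
        simp only [hFdef, hcase]
        have : ((m - 1 : ℕ) : ℤ) = (m : ℤ) - 1 := by omega
        rw [this]
      by_cases hq : q + 1 < g
      · have h3 : (t + 1) / m % g = q + 1 := by
          rw [h1, hmodq, Nat.mod_eq_of_lt hq]
        have hF1 : F (t + 1) = S (q + 1) := by
          have : F (t + 1) = S ((t+1) / m % g)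
              + ε ((t+1) / m % g) * ((((t+1) % m : ℕ) : ℤ) * a₁) := rfl
          rw [this, h3, h2, Nat.cast_zero, zero_mul, mul_zero, add_zero]
        simp only [hfdef, hF1, hFt, hSrec q]
        push_cast
        ring
      · have hqeq : q + 1 = g := by omega
        have h3 : (t + 1) / m % g = 0 := by
          rw [h1, hmodq, hqeq, Nat.mod_self]
        have hF1 : F (t + 1) = S 0 := by
          have : F (t + 1) = S ((t+1) / m % g)
              + ε ((t+1) / m % g) * ((((t+1) % m : ℕ) : ℤ) * a₁) := rfl
          rw [this, h3, h2, Nat.cast_zero, zero_mul, mul_zero, add_zero]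
        have hS0 : S 0 = 0 := by simp [hSdef]
        have hFa : ((F t + a₂ : ℤ) : ZMod n) = 0 := by
          have : F t + a₂ = S g := by rw [hFt, ← hqeq, hSrec q]
          rw [this]; exact hSg
        simp only [hfdef, hF1, hS0]
        push_cast at hFa ⊢
        linear_combination -hFa
    · -- a₁ step
      rw [if_neg hcase]
      have ht1 : t + 1 = (t % m + 1) + m * (t / m) := by omega
      have h1 : (t + 1) / m = t / m := by
        rw [ht1, Nat.add_mul_div_left _ _ hmpos, Nat.div_eq_of_lt (by omega)]
        omega
      have h2 : (t + 1) % m = t % m + 1 := by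
        rw [ht1, Nat.add_mul_mod_self_left, Nat.mod_eq_of_lt (by omega)]
      have : F (t + 1) - F t = ε ((t / m) % g) * a₁ := by
        simp only [hFdef, h1, h2]
        push_cast
        ring
      calc f (t + 1) - f t = ((F (t + 1) - F t : ℤ) : ZMod n) := by
            simp only [hfdef]; push_cast; ring
        _ = _ := by rw [this]; push_cast; ring
  -- periodicity
  have hper : ∀ t : ℕ, f (t + n) = f t := by
    intro t
    have h1 : (t + n) / m = t / m + g := by
      rw [← hmn]; rw [Nat.add_mul_div_left _ _ (by omega : 0 < m)]
    have h2 : (t + n) % m = t % m := by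
      rw [← hmn]; simp [Nat.add_mul_mod_self_left]
    simp only [hfdef, hFdef, h1, h2, Nat.add_mod_right]
  -- injectivity on [0, n)
  haveI : NeZero g := ⟨hgpos.ne'⟩
  have hinj : ∀ s t : ℕ, s < n → t < n → f s = f t → s = t := by
    intro s t hs ht hst
    have hmpos : 0 < m := by omega
    have hgm : g * m = n := by rw [mul_comm]; exact hmn
    have hsq : s / m < g := (Nat.div_lt_iff_lt_mul hmpos).mpr (by rw [hgm]; exact hs)
    have htq : t / m < g := (Nat.div_lt_iff_lt_mul hmpos).mpr (by rw [hgm]; exact ht)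
    set φ : ZMod n →+* ZMod g := ZMod.castHom hgdvdn (ZMod g) with hφdef
    have ha₁g : ((a₁ : ℕ) : ZMod g) = 0 := by
      rw [ZMod.natCast_eq_zero_iff]
      exact hgdvda
    have hφf : ∀ u : ℕ, φ (f u) = ((u / m) % g : ℕ) * (a₂ : ZMod g) := by
      intro u
      have h1 : φ (f u) = ((F u : ℤ) : ZMod g) := by
        simp only [hfdef, map_intCast]
      have hdvd : (g : ℤ) ∣ F u - ((u / m % g : ℕ) : ℤ) * a₂ := by
        obtain ⟨a', ha'⟩ := hgdvda
        refine ⟨a' * ((2 * ((min (u/m%g) Y : ℕ) : ℤ) - ((u/m%g : ℕ) : ℤ)) * ((m:ℤ)-1)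
          + ε (u/m%g) * ((u%m : ℕ) : ℤ)), ?_⟩
        have h2 : F u = S (u/m % g) + ε (u/m % g) * (((u % m : ℕ) : ℤ) * a₁) := rfl
        have h3 : S (u/m % g) = ((u/m%g : ℕ) : ℤ) * a₂
            + (2 * ((min (u/m%g) Y : ℕ) : ℤ) - ((u/m%g : ℕ) : ℤ)) * (((m : ℤ) - 1) * a₁) := rfl
        rw [h2, h3, ha']
        push_cast
        ring
      have h4 : ((F u - ((u / m % g : ℕ) : ℤ) * a₂ : ℤ) : ZMod g) = 0 :=
        (ZMod.intCast_zmod_eq_zero_iff_dvd _ g).mpr hdvd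
      rw [Int.cast_sub, Int.cast_mul, Int.cast_natCast, Int.cast_natCast, sub_eq_zero] at h4
      rw [h1, h4]
    have hq : (s / m) % g = (t / m) % g := by
      have h1 : ((s / m) % g : ℕ) * (a₂ : ZMod g) = ((t / m) % g : ℕ) * (a₂ : ZMod g) := by
        rw [← hφf s, ← hφf t, hst]
      have hu : IsUnit (a₂ : ZMod g) := by
        rw [ZMod.isUnit_iff_coprime]
        exact Nat.Coprime.symm hg
      have h2 : (((s / m) % g : ℕ) : ZMod g) = ((t / m) % g : ℕ) := by
        obtain ⟨u, hu'⟩ := hu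
        have := congrArg (fun z => z * ((u⁻¹ : (ZMod g)ˣ) : ZMod g)) h1
        simpa [← hu', mul_assoc] using this
      have := congrArg ZMod.val h2
      rwa [ZMod.val_cast_of_lt (Nat.mod_lt _ hgpos), ZMod.val_cast_of_lt (Nat.mod_lt _ hgpos)]
        at this
    rw [Nat.mod_eq_of_lt hsq, Nat.mod_eq_of_lt htq] at hq
    -- now equal segment; compare residues
    have hres : s % m = t % m := by
      have h0 : (((ε ((s / m) % g) * ((s % m : ℕ) - (t % m : ℕ) : ℤ)) * (a₁ : ℤ) : ℤ) : ZMod n)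
          = 0 := by
        have : ((F s - F t : ℤ) : ZMod n) = 0 := by
          simp only [hfdef] at hst
          push_cast
          rw [hst]; ring
        have hFst : F s - F t = (ε ((s / m) % g) * ((s % m : ℕ) - (t % m : ℕ) : ℤ)) * a₁ := by
          simp only [hFdef, hq]
          push_cast
          ring
        rwa [hFst] at this
      have hdvd : (m : ℤ) ∣ ε ((s / m) % g) * ((s % m : ℕ) - (t % m : ℕ)) := (horder _).mp h0
      have hdvd2 : (m : ℤ) ∣ ((s % m : ℕ) - (t % m : ℕ) : ℤ) := by
        rcases lt_or_ge ((s / m) % g) Y with h | h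
        · simpa [hεdef, if_pos h] using hdvd
        · rw [hεdef] at hdvd
          simp only [if_neg (by omega : ¬ (s / m) % g < Y)] at hdvd
          exact (dvd_neg.mp (by simpa [neg_mul] using hdvd))
      have habs : |((s % m : ℕ) - (t % m : ℕ) : ℤ)| < m := by
        have h1 : s % m < m := Nat.mod_lt _ (by omega)
        have h2 : t % m < m := Nat.mod_lt _ (by omega)
        rw [abs_lt]
        constructor <;> [push_cast; push_cast] <;> omega
      have := Int.eq_zero_of_abs_lt_dvd hdvd2 habs
      omega
    have hds := Nat.div_add_mod s m
    have hdt := Nat.div_add_mod t m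
    have : m * (s / m) = m * (t / m) := by rw [hq]
    omega
  -- distinctness facts about the stripe lengths in ZMod n
  have hA1 : ((a₁ : ℕ) : ZMod n) ≠ 0 := by
    rw [Ne, ZMod.natCast_eq_zero_iff]
    intro h
    have := Nat.le_of_dvd (by omega) h
    omega
  have hA2 : ((a₂ : ℕ) : ZMod n) ≠ 0 := by
    rw [Ne, ZMod.natCast_eq_zero_iff]
    intro h
    have := Nat.le_of_dvd (by omega) h
    omega
  have hA12 : ((a₁ : ℕ) : ZMod n) ≠ ((a₂ : ℕ) : ZMod n) := by
    intro h
    have := congrArg ZMod.val h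
    rw [ZMod.val_cast_of_lt ha₁n, ZMod.val_cast_of_lt ha₂n] at this
    exact hne this
  have hA12' : ((a₁ : ℕ) : ZMod n) ≠ -((a₂ : ℕ) : ZMod n) := by
    intro h
    have h2 : ((a₁ + a₂ : ℕ) : ZMod n) = 0 := by push_cast; rw [h]; ring
    rw [ZMod.natCast_eq_zero_iff] at h2
    have := Nat.le_of_dvd (by omega) h2
    omega
  set Gr : SimpleGraph (ZMod n) :=
    SimpleGraph.circulantGraph ({(a₁ : ZMod n), (a₂ : ZMod n)} : Set (ZMod n)) with hGr
  -- adjacency along the walk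
  have hadj : ∀ i : ℕ, Gr.Adj (f i) (f (i + 1)) := by
    intro i
    have h := hstep i
    rw [hGr]
    rw [SimpleGraph.circulantGraph_adj]
    simp only [Set.mem_insert_iff, Set.mem_singleton_iff]
    by_cases hc : i % m = m - 1
    · rw [if_pos hc] at h
      refine ⟨?_, Or.inr (Or.inr h)⟩
      intro he
      rw [he, sub_self] at h
      exact hA2 h.symm
    · rw [if_neg hc] at h
      rcases lt_or_ge ((i / m) % g) Y with hl | hl
      · rw [hεdef] at h
        simp only [if_pos hl] at h
        push_cast at h
        rw [one_mul] at h
        refine ⟨?_, Or.inr (Or.inl h)⟩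
        intro he
        rw [he, sub_self] at h
        exact hA1 h.symm
      · rw [hεdef] at h
        simp only [if_neg (by omega : ¬ (i / m) % g < Y)] at h
        push_cast at h
        have h' : f i - f (i + 1) = ((a₁ : ℕ) : ZMod n) := by linear_combination -h
        refine ⟨?_, Or.inl (Or.inl h')⟩
        intro he
        rw [he, sub_self] at h'
        exact hA1 h'.symm
  have hfn : f n = f 0 := by
    have := hper 0
    rwa [zero_add] at this
  -- the walk
  set w : Gr.Walk (f 0) (f 0) := (Stmt3Aux.walkOf f hadj n).copy rfl hfn with hwdef
  have hsupp : w.support = (List.range (n + 1)).map f := by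
    rw [hwdef, SimpleGraph.Walk.support_copy, Stmt3Aux.support_walkOf]
  have hdarts : w.darts = (List.range n).map (fun i => ⟨(f i, f (i + 1)), hadj i⟩) := by
    rw [hwdef, SimpleGraph.Walk.darts_copy, Stmt3Aux.darts_walkOf]
  have hlen : w.length = n := by
    rw [hwdef, SimpleGraph.Walk.length_copy, Stmt3Aux.length_walkOf]
  -- extended injectivity for shifted indices
  have hinj2 : ∀ i j : ℕ, i < n → j < n → f (i + 1) = f (j + 1) → i = j := by
    intro i j hi hj hij
    rcases Nat.lt_or_ge (i + 1) n with h1 | h1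
    · rcases Nat.lt_or_ge (j + 1) n with h2 | h2
      · exact Nat.succ_injective (hinj _ _ h1 h2 hij)
      · have hj1 : j + 1 = n := by omega
        rw [hj1, hfn] at hij
        have := hinj _ _ h1 hn hij
        omega
    · have hi1 : i + 1 = n := by omega
      rw [hi1, hfn] at hij
      rcases Nat.lt_or_ge (j + 1) n with h2 | h2
      · have := hinj _ _ hn h2 hij
        omega
      · omega
  -- support tail
  have htail : w.support.tail = (List.range n).map (f ∘ Nat.succ) := by
    rw [hsupp, List.range_succ_eq_map, List.map_cons, List.map_map, List.tail_cons]
  have htail_nodup : w.support.tail.Nodup := by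
    rw [htail]
    refine List.Nodup.map_on ?_ List.nodup_range
    intro i hi j hj hij
    exact hinj2 i j (List.mem_range.mp hi) (List.mem_range.mp hj) hij
  have htail_mem : ∀ v : ZMod n, v ∈ w.support.tail := by
    intro v
    have hlen' : w.support.tail.length = n := by
      rw [htail, List.length_map, List.length_range]
    have hcard : w.support.tail.toFinset.card = n := by
      rw [List.toFinset_card_of_nodup htail_nodup, hlen']
    have huniv : w.support.tail.toFinset = Finset.univ := by
      apply Finset.eq_univ_of_card
      rw [hcard, ZMod.card]
    rw [← List.mem_toFinset, huniv]
    exact Finset.mem_univ v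
  -- edges
  have hedges : w.edges = (List.range n).map (fun i => s(f i, f (i + 1))) := by
    rw [SimpleGraph.Walk.edges, hdarts, List.map_map]
    rfl
  have hedges_nodup : w.edges.Nodup := by
    rw [hedges]
    refine List.Nodup.map_on ?_ List.nodup_range
    intro i hi j hj hij
    rw [List.mem_range] at hi hj
    rw [Sym2.eq_iff] at hij
    rcases hij with ⟨h1, h2⟩ | ⟨h1, h2⟩
    · exact hinj _ _ hi hj h1
    · -- f i = f (j+1), f (i+1) = f j
      rcases Nat.lt_or_ge (j + 1) n with hj1 | hj1
      · have hij' : i = j + 1 := hinj _ _ hi hj1 h1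
        rcases Nat.lt_or_ge (i + 1) n with hi1 | hi1
        · have := hinj _ _ hi1 hj h2
          omega
        · have hi1' : i + 1 = n := by omega
          rw [hi1', hfn] at h2
          have := hinj _ _ hn hj h2
          omega
      · have hj1' : j + 1 = n := by omega
        rw [hj1', hfn] at h1
        have hi0 : i = 0 := hinj _ _ hi hn h1
        have h1n : (1 : ℕ) < n := by omega
        rw [hi0] at h2
        have := hinj _ _ h1n hj h2
        omega
  have hcycle : w.IsCycle := by
    refine ⟨⟨⟨hedges_nodup⟩, ?_⟩, htail_nodup⟩
    intro hnil
    have := congrArg SimpleGraph.Walk.length hnil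
    rw [hlen, SimpleGraph.Walk.length_nil] at this
    omega
  refine ⟨f 0, w, ?_, ?_⟩
  · rw [SimpleGraph.Walk.isHamiltonianCycle_iff_isCycle_and_support_count_tail_eq_one]
    refine ⟨hcycle, fun v => List.count_eq_one_of_mem htail_nodup (htail_mem v)⟩
  · rw [hdarts, List.countP_map]
    have hcongr : List.countP
        ((fun d : Gr.Dart => decide (d.toProd.2 - d.toProd.1 = ((a₂ : ℕ) : ZMod n) ∨
          d.toProd.1 - d.toProd.2 = ((a₂ : ℕ) : ZMod n)))
          ∘ (fun i => (⟨(f i, f (i + 1)), hadj i⟩ : Gr.Dart))) (List.range n)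
        = List.countP (fun i => decide (i % m = m - 1)) (List.range n) := by
      refine List.countP_congr ?_
      intro i _
      simp only [Function.comp_apply, decide_eq_true_eq]
      have h := hstep i
      by_cases hc : i % m = m - 1
      · rw [if_pos hc] at h
        constructor
        · intro; exact hc
        · intro; exact Or.inl h
      · rw [if_neg hc] at h
        constructor
        · rintro (h1 | h1)
          · exfalso
            rw [h1] at h
            rw [hεdef] at h
            rcases lt_or_ge ((i / m) % g) Y with hl | hl
            · simp only [if_pos hl] at h
              push_cast at h
              rw [one_mul] at h
              exact hA12 (h.symm) |>.elim
            · simp only [if_neg (by omega : ¬ (i / m) % g < Y)] at h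
              push_cast at h
              apply hA12'
              linear_combination h
          · exfalso
            rw [hεdef] at h
            have h1' : f (i + 1) - f i = -(((a₂ : ℕ) : ZMod n)) := by
              rw [← h1]; ring
            rw [h1'] at h
            rcases lt_or_ge ((i / m) % g) Y with hl | hl
            · simp only [if_pos hl] at h
              push_cast at h
              apply hA12'
              linear_combination -h
            · simp only [if_neg (by omega : ¬ (i / m) % g < Y)] at h
              push_cast at h
              apply hA12
              linear_combination h
        · intro h1
          exact absurd h1 hc
    rw [hcongr]
    have hcnt : ∀ k : ℕ, (List.range (k * m)).countP (fun i => decide (i % m = m - 1)) = k := by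
      intro k
      induction k with
      | zero => simp
      | succ k ih =>
          rw [show (k + 1) * m = k * m + m by ring, List.range_add, List.countP_append, ih,
            List.countP_map]
          have : List.countP ((fun i => decide (i % m = m - 1)) ∘ (fun x => k * m + x))
              (List.range m) = List.countP (fun j => decide (j = m - 1)) (List.range m) := by
            refine List.countP_congr ?_
            intro j hj
            rw [List.mem_range] at hj
            simp only [Function.comp_apply, decide_eq_true_eq]
            rw [show k * m + j = j + k * m by ring, Nat.add_mul_mod_self_right,
              Nat.mod_eq_of_lt hj]
          rw [this]
          have h1 : List.countP (fun j => decide (j = m - 1)) (List.range m)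
              = List.count (m - 1) (List.range m) := by
            rw [List.count]
            refine List.countP_congr ?_
            intro x _
            constructor
            · intro hx; simp only [decide_eq_true_eq] at hx; simp [hx]
            · intro hx; simp only [beq_iff_eq] at hx; simp [hx]
          rw [h1, List.count_eq_one_of_mem List.nodup_range
            (List.mem_range.mpr (by omega : m - 1 < m))]
    have := hcnt g
    rw [show g * m = n by rw [mul_comm]; exact hmn] at this
    exact this
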